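/- Logarithmic gradient estimate for solutions of the stable ODE (Step 6 of Lemma 4.2). Let a > 0, b > 0, ϑ ∈ (0,1], A > 0 and let c₁ > 0 be a constant. Suppose h : (−A,A) → ℝ is an even, twice continuously differentiable function satisfying (1/2) h″(x) = −a h(x) + b h(x)^{1+ϑ}, together with the bounds (a/b)^{1/ϑ} ≤ h(x) ≤ (a/b)^{1/ϑ} (1 + c₁ A^{2/ϑ} (A² − x²)^{−2/ϑ}) for all |x| < A. Then h′ is nondecreasing on (−A,A), and 0 ≤ h′(x)/h(x) ≤ 2 a c₁^ϑ / (A − x) for all x ∈ [0,A). -/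

import Mathlib

open MeasureTheory Set Filter Topology

private lemma aux_add_rpow_le {x y p : ℝ} (hx : 0 ≤ x) (hy : 0 ≤ y) (hp : 0 ≤ p) (hp1 : p ≤ 1) :
    (x + y) ^ p ≤ x ^ p + y ^ p := by
  lift x to NNReal using hx
  lift y to NNReal using hy
  have := NNReal.rpow_add_le_add_rpow x y hp hp1
  exact_mod_cast this

set_option maxHeartbeats 1000000 in
/-- Logarithmic gradient estimate for solutions of the stable ODE (Step 6 of Lemma 4.2):
if h is even, C², solves (1/2)h″ = −a h + b h^{1+ϑ} on (−A,A) and satisfies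
(a/b)^{1/ϑ} ≤ h(x) ≤ (a/b)^{1/ϑ}(1 + c₁ A^{2/ϑ}(A² − x²)^{−2/ϑ}), then h′ is
nondecreasing on (−A,A) and 0 ≤ h′(x)/h(x) ≤ 2 a c₁^ϑ/(A − x) for 0 ≤ x < A. -/
theorem stable_gradient_estimate
    (a b ϑ A c₁ : ℝ) (ha : 0 < a) (hb : 0 < b) (hϑ₀ : 0 < ϑ) (hϑ₁ : ϑ ≤ 1)
    (hA : 0 < A) (hc₁ : 0 < c₁)
    (h : ℝ → ℝ)
    (heven : ∀ x : ℝ, |x| < A → h (-x) = h x)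
    (hsm : ∀ x ∈ Ioo (-A) A, ContDiffAt ℝ 2 h x)
    (hode : ∀ x : ℝ, |x| < A →
      (1 / 2) * deriv (deriv h) x = -a * h x + b * h x ^ (1 + ϑ))
    (hlow : ∀ x : ℝ, |x| < A → (a / b) ^ (1 / ϑ) ≤ h x)
    (hup : ∀ x : ℝ, |x| < A →
      h x ≤ (a / b) ^ (1 / ϑ) * (1 + c₁ * A ^ (2 / ϑ) * (A ^ 2 - x ^ 2) ^ (-(2 / ϑ)))) :
    MonotoneOn (deriv h) (Ioo (-A) A) ∧
    ∀ x : ℝ, 0 ≤ x → x < A →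
      0 ≤ deriv h x / h x ∧ deriv h x / h x ≤ 2 * a * c₁ ^ ϑ / (A - x) := by
  have hϑne : ϑ ≠ 0 := ne_of_gt hϑ₀
  have hab : (0:ℝ) < a / b := div_pos ha hb
  have hm_pos : 0 < (a/b) ^ (1/ϑ) := Real.rpow_pos_of_pos hab _
  have hmϑ : ((a/b) ^ (1/ϑ)) ^ ϑ = a/b := by
    rw [← Real.rpow_mul hab.le, one_div_mul_cancel hϑne, Real.rpow_one]
  have hpos : ∀ t : ℝ, |t| < A → 0 < h t := fun t ht => lt_of_lt_of_le hm_pos (hlow t ht)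
  have habs : ∀ t ∈ Ioo (-A) A, |t| < A := fun t ht => abs_lt.2 ⟨ht.1, ht.2⟩
  -- smoothness package
  have hs : ContDiffOn ℝ 2 h (Ioo (-A) A) := fun y hy => (hsm y hy).contDiffWithinAt
  have hd1 : ContDiffOn ℝ 1 (deriv h) (Ioo (-A) A) :=
    hs.deriv_of_isOpen isOpen_Ioo (by norm_num)
  have hdiff : ∀ t ∈ Ioo (-A) A, DifferentiableAt ℝ h t := fun t ht =>
    (hsm t ht).differentiableAt (by norm_num)
  have hdiff' : ∀ t ∈ Ioo (-A) A, DifferentiableAt ℝ (deriv h) t := fun t ht =>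
    (hd1.differentiableOn one_ne_zero).differentiableAt (isOpen_Ioo.mem_nhds ht)
  -- lower bound: a ≤ b * h t ^ ϑ
  have hge1 : ∀ t : ℝ, |t| < A → a ≤ b * h t ^ ϑ := by
    intro t ht
    have h1 : a/b ≤ h t ^ ϑ := by
      calc a/b = ((a/b) ^ (1/ϑ)) ^ ϑ := hmϑ.symm
        _ ≤ h t ^ ϑ := Real.rpow_le_rpow hm_pos.le (hlow t ht) hϑ₀.le
    calc a = b * (a/b) := by field_simp
      _ ≤ b * h t ^ ϑ := by nlinarith
  have hsplit : ∀ t : ℝ, |t| < A → b * h t ^ (1+ϑ) = (b * h t ^ ϑ) * h t := by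
    intro t ht
    rw [Real.rpow_add (hpos t ht), Real.rpow_one]; ring
  have hDeq : ∀ t : ℝ, |t| < A →
      deriv (deriv h) t = 2 * ((b * h t ^ ϑ) * h t - a * h t) := by
    intro t ht
    have h2 := hsplit t ht
    have h3 := hode t ht
    linarith
  -- h'' ≥ 0
  have hge2 : ∀ t ∈ Ioo (-A) A, 0 ≤ deriv (deriv h) t := by
    intro t ht
    rw [hDeq t (habs t ht)]
    have := hge1 t (habs t ht)
    nlinarith [hpos t (habs t ht)]
  -- monotonicity of deriv h
  have hmono' : MonotoneOn (deriv h) (Ioo (-A) A) := by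
    apply monotoneOn_of_deriv_nonneg (convex_Ioo _ _) hd1.continuousOn
    · rw [interior_Ioo]
      exact fun t ht => (hdiff' t ht).differentiableWithinAt
    · rw [interior_Ioo]
      exact hge2
  have h0mem : (0:ℝ) ∈ Ioo (-A) A := ⟨by linarith, hA⟩
  -- deriv h 0 = 0 by evenness
  have hd0 : deriv h 0 = 0 := by
    have heq : h =ᶠ[𝓝 (0:ℝ)] (fun y => h (-y)) := by
      filter_upwards [isOpen_Ioo.mem_nhds h0mem] with y hy
      exact (heven y (abs_lt.2 ⟨hy.1, hy.2⟩)).symm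
    have h1 : deriv h 0 = deriv (fun y => h (-y)) 0 := heq.deriv_eq
    rw [deriv_comp_neg, neg_zero] at h1
    linarith
  have hder_nonneg : ∀ t : ℝ, 0 ≤ t → t < A → 0 ≤ deriv h t := by
    intro t ht0 htA
    have := hmono' h0mem ⟨by linarith, htA⟩ ht0
    rwa [hd0] at this
  -- h is monotone on [0, A)
  have hsub1 : Ico (0:ℝ) A ⊆ Ioo (-A) A := fun y hy => ⟨by linarith [hy.1], hy.2⟩
  have hmonoh : MonotoneOn h (Ico 0 A) := by
    apply monotoneOn_of_deriv_nonneg (convex_Ico _ _) (hs.continuousOn.mono hsub1)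
    · rw [interior_Ico]
      exact fun t ht => (hdiff t ⟨by linarith [ht.1], ht.2⟩).differentiableWithinAt
    · rw [interior_Ico]
      exact fun t ht => hder_nonneg t ht.1.le ht.2
  -- key pointwise bound on h''
  have hkey : ∀ t : ℝ, 0 ≤ t → t < A →
      deriv (deriv h) t ≤ 2 * a * c₁ ^ ϑ * ((A - t)^2)⁻¹ * h t := by
    intro t ht0 htA
    have htabs : |t| < A := abs_lt.2 ⟨by linarith, htA⟩
    have hht := hpos t htabs
    have hA2 : (0:ℝ) < A^2 - t^2 := by nlinarith
    have hstep : b * h t ^ ϑ ≤ a + a * c₁ ^ ϑ * ((A - t)^2)⁻¹ := by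
      set E := c₁ * A ^ (2/ϑ) * (A ^ 2 - t ^ 2) ^ (-(2/ϑ)) with hE_def
      have hE : 0 ≤ E := by
        have h1 := Real.rpow_pos_of_pos hA (2/ϑ)
        have h2 := Real.rpow_pos_of_pos hA2 (-(2/ϑ))
        positivity
      have step1 : h t ^ ϑ ≤ ((a/b) ^ (1/ϑ) * (1 + E)) ^ ϑ :=
        Real.rpow_le_rpow hht.le (hup t htabs) hϑ₀.le
      have step2 : ((a/b) ^ (1/ϑ) * (1 + E)) ^ ϑ = (a/b) * (1 + E) ^ ϑ := by
        rw [Real.mul_rpow hm_pos.le (by linarith), hmϑ]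
      have step3 : (1 + E) ^ ϑ ≤ 1 + E ^ ϑ := by
        have := aux_add_rpow_le (zero_le_one) hE hϑ₀.le hϑ₁
        rwa [Real.one_rpow] at this
      have e1 : (A ^ (2/ϑ)) ^ ϑ = A ^ 2 := by
        rw [← Real.rpow_mul hA.le]
        have he : (2/ϑ) * ϑ = 2 := by field_simp
        rw [he, Real.rpow_two]
      have e2 : ((A ^ 2 - t ^ 2) ^ (-(2/ϑ))) ^ ϑ = ((A ^ 2 - t ^ 2) ^ 2)⁻¹ := by
        rw [← Real.rpow_mul hA2.le]
        have he : (-(2/ϑ)) * ϑ = -2 := by field_simp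
        rw [he, show ((-2 : ℝ) = -(2:ℝ)) from rfl, Real.rpow_neg hA2.le, Real.rpow_two]
      have step4 : E ^ ϑ = c₁ ^ ϑ * (A ^ 2 * ((A ^ 2 - t ^ 2) ^ 2)⁻¹) := by
        rw [hE_def, Real.mul_rpow (by positivity) (Real.rpow_nonneg hA2.le _),
          Real.mul_rpow hc₁.le (Real.rpow_nonneg hA.le _), e1, e2]
        ring
      have step5 : A ^ 2 * ((A ^ 2 - t ^ 2) ^ 2)⁻¹ ≤ ((A - t) ^ 2)⁻¹ := by
        have h1 : (A - t)^2 * A^2 ≤ (A^2 - t^2)^2 := by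
          nlinarith [mul_nonneg (sq_nonneg (A - t)) (show (0:ℝ) ≤ 2*A*t + t^2 by nlinarith)]
        have h2 : (0:ℝ) < (A - t)^2 := pow_pos (by linarith) 2
        have h3 : (0:ℝ) < (A^2 - t^2)^2 := pow_pos hA2 2
        rw [← div_eq_mul_inv, div_le_iff₀ h3, inv_mul_eq_div, le_div_iff₀ h2]
        nlinarith [h1]
      have hcϑ : (0:ℝ) ≤ a * c₁ ^ ϑ := mul_nonneg ha.le (Real.rpow_nonneg hc₁.le _)
      calc b * h t ^ ϑ ≤ b * ((a/b) * (1 + E) ^ ϑ) := by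
            rw [← step2]; exact mul_le_mul_of_nonneg_left step1 hb.le
        _ = a * (1 + E) ^ ϑ := by field_simp
        _ ≤ a * (1 + E ^ ϑ) := mul_le_mul_of_nonneg_left step3 ha.le
        _ = a + a * (c₁ ^ ϑ * (A ^ 2 * ((A ^ 2 - t ^ 2) ^ 2)⁻¹)) := by rw [step4]; ring
        _ ≤ a + a * c₁ ^ ϑ * ((A - t) ^ 2)⁻¹ := by
            linarith [mul_le_mul_of_nonneg_left step5 hcϑ]
    rw [hDeq t htabs]
    linarith [mul_le_mul_of_nonneg_right hstep hht.le]
  refine ⟨hmono', fun x hx0 hxA => ?_⟩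
  have hxabs : |x| < A := abs_lt.2 ⟨by linarith, hxA⟩
  have hhx : 0 < h x := hpos x hxabs
  have hAx : 0 < A - x := by linarith
  refine ⟨div_nonneg (hder_nonneg x hx0 hxA) hhx.le, ?_⟩
  set C := 2 * a * c₁ ^ ϑ * h x with hC
  have hCnn : 0 ≤ C := by
    have := Real.rpow_nonneg hc₁.le ϑ
    positivity
  set F : ℝ → ℝ := fun t => C * ((A - t)⁻¹ - A⁻¹) - deriv h t with hF
  have hFder : ∀ t ∈ Ioo (0:ℝ) x, HasDerivAt F (C * ((A - t)^2)⁻¹ - deriv (deriv h) t) t := by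
    intro t ht
    have htI : t ∈ Ioo (-A) A := ⟨by linarith [ht.1], by linarith [ht.2, hxA]⟩
    have hAt : A - t ≠ 0 := by have := ht.2; intro hh; nlinarith
    have h1 : HasDerivAt (fun s : ℝ => A - s) (-1) t := by
      simpa using (hasDerivAt_id t).const_sub A
    have h2 : HasDerivAt (fun s : ℝ => (A - s)⁻¹) (((A - t)^2)⁻¹) t := by
      have h2' := h1.inv hAt
      refine h2'.congr_deriv ?_
      ring
    have h3 : HasDerivAt (fun s : ℝ => C * ((A - s)⁻¹ - A⁻¹)) (C * ((A - t)^2)⁻¹) t := by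
      simpa using (h2.sub_const A⁻¹).const_mul C
    exact h3.sub ((hdiff' t htI).hasDerivAt)
  have hsub2 : Icc (0:ℝ) x ⊆ Ioo (-A) A := fun y hy =>
    ⟨by linarith [hy.1], lt_of_le_of_lt hy.2 hxA⟩
  have hne : ∀ t ∈ Icc (0:ℝ) x, A - t ≠ 0 := by
    intro t ht
    have := lt_of_le_of_lt ht.2 hxA
    intro hh; linarith
  have hFmono : MonotoneOn F (Icc 0 x) := by
    apply monotoneOn_of_deriv_nonneg (convex_Icc _ _)
    · apply ContinuousOn.sub
      · exact continuousOn_const.mul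
          (((continuousOn_const.sub continuousOn_id).inv₀ hne).sub continuousOn_const)
      · exact hd1.continuousOn.mono hsub2
    · rw [interior_Icc]
      exact fun t ht => (hFder t ht).differentiableAt.differentiableWithinAt
    · rw [interior_Icc]
      intro t ht
      rw [(hFder t ht).deriv]
      have hk := hkey t ht.1.le (lt_trans ht.2 hxA)
      have hle : h t ≤ h x := hmonoh ⟨ht.1.le, lt_trans ht.2 hxA⟩ ⟨hx0, hxA⟩ ht.2.le
      have hinv : (0:ℝ) ≤ ((A - t)^2)⁻¹ := by positivity
      have hc2 : (0:ℝ) ≤ 2 * a * c₁ ^ ϑ := by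
        have := Real.rpow_nonneg hc₁.le ϑ
        positivity
      have h4 : 2 * a * c₁ ^ ϑ * ((A - t)^2)⁻¹ * h t ≤ C * ((A - t)^2)⁻¹ := by
        rw [hC]
        nlinarith [mul_le_mul_of_nonneg_left hle (mul_nonneg hc2 hinv)]
      linarith
  have hF0 : F 0 ≤ F x := hFmono ⟨le_refl 0, hx0⟩ ⟨hx0, le_refl x⟩ hx0
  have hF0v : F 0 = 0 := by
    simp [hF, hd0]
  have hFxv : F x = C * ((A - x)⁻¹ - A⁻¹) - deriv h x := rfl
  have hDle : deriv h x ≤ C * (A - x)⁻¹ := by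
    have h5 : deriv h x ≤ C * ((A - x)⁻¹ - A⁻¹) := by
      rw [hF0v] at hF0
      rw [hFxv] at hF0
      linarith
    have h6 : 0 ≤ C * A⁻¹ := mul_nonneg hCnn (by positivity)
    nlinarith [h5, h6]
  rw [div_le_div_iff₀ hhx hAx]
  calc deriv h x * (A - x) ≤ C * (A - x)⁻¹ * (A - x) :=
        mul_le_mul_of_nonneg_right hDle hAx.le
    _ = C := by field_simp
    _ = 2 * a * c₁ ^ ϑ * h x := hC
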